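/- Let a ∈ ℝ, let I ⊆ ℝ be an interval containing 0, and let y, z : ℝ → ℝ be twice differentiable on I with y''(s) = (1 − 2·y(s)² − 8·z(s)²)·y(s), z''(s) = (4 − 2·y(s)² − 8·z(s)²)·z(s) on I, and y(0) = 0, y'(0) = 2a, z(0) = a, z'(0) = 0. Assume moreover y(s)² + z(s)² < 1 for all s ∈ I, and define x(s) = √(1 − y(s)² − z(s)²). Then x is differentiable on I and for all s ∈ I: x'(s)² + y'(s)² + z'(s)² = y(s)² + 4·z(s)². -/

import Mathlib

/-- **Conformal factor relation for `x = √(1 − y² − z²)`.**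
If `y, z` solve the EGJ system on an interval `I ∋ 0` with the EGJ initial data and
`y² + z² < 1` on `I`, then `x = √(1 − y² − z²)` is differentiable on `I` and
`(x')² + (y')² + (z')² = y² + 4z²` on `I`. -/
theorem egj_x_derivative_identity
    (a : ℝ) (I : Set ℝ) (hI : I.OrdConnected) (h0 : (0 : ℝ) ∈ I)
    (y z y' z' y'' z'' : ℝ → ℝ)
    (hy : ∀ s ∈ I, HasDerivAt y (y' s) s)
    (hy' : ∀ s ∈ I, HasDerivAt y' (y'' s) s)
    (hz : ∀ s ∈ I, HasDerivAt z (z' s) s)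
    (hz' : ∀ s ∈ I, HasDerivAt z' (z'' s) s)
    (hODEy : ∀ s ∈ I, y'' s = (1 - 2 * (y s) ^ 2 - 8 * (z s) ^ 2) * y s)
    (hODEz : ∀ s ∈ I, z'' s = (4 - 2 * (y s) ^ 2 - 8 * (z s) ^ 2) * z s)
    (hy0 : y 0 = 0) (hy'0 : y' 0 = 2 * a) (hz0 : z 0 = a) (hz'0 : z' 0 = 0)
    (hlt : ∀ s ∈ I, (y s) ^ 2 + (z s) ^ 2 < 1)
    (x : ℝ → ℝ) (hx : ∀ s, x s = Real.sqrt (1 - (y s) ^ 2 - (z s) ^ 2)) :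
    ∃ x' : ℝ → ℝ,
      (∀ s ∈ I, HasDerivAt x (x' s) s) ∧
      ∀ s ∈ I, (x' s) ^ 2 + (y' s) ^ 2 + (z' s) ^ 2 = (y s) ^ 2 + 4 * (z s) ^ 2 := by
  have hconv : Convex ℝ I := convex_iff_ordConnected.mpr hI
  set H : ℝ → ℝ := fun t =>
    (y t * y' t + z t * z' t) ^ 2 -
      (y t ^ 2 + 4 * z t ^ 2 - y' t ^ 2 - z' t ^ 2) * (1 - y t ^ 2 - z t ^ 2) with hHdef
  have hHderiv : ∀ s ∈ I, HasDerivAt H 0 s := by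
    intro s hs
    have hw : HasDerivAt (fun t => y t * y' t + z t * z' t)
        (y' s * y' s + y s * y'' s + (z' s * z' s + z s * z'' s)) s :=
      ((hy s hs).mul (hy' s hs)).add ((hz s hs).mul (hz' s hs))
    have hP : HasDerivAt (fun t => y t ^ 2 + 4 * z t ^ 2 - y' t ^ 2 - z' t ^ 2)
        (2 * y s * y' s + 4 * (2 * z s * z' s) - 2 * y' s * y'' s
          - 2 * z' s * z'' s) s := by
      have h := (((hy s hs).pow 2).add (((hz s hs).pow 2).const_mul 4)).sub
        ((hy' s hs).pow 2) |>.sub ((hz' s hs).pow 2)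
      refine h.congr_deriv ?_
      push_cast
      ring
    have hv : HasDerivAt (fun t => 1 - y t ^ 2 - z t ^ 2)
        (-(2 * y s * y' s) - 2 * z s * z' s) s := by
      have h := ((hasDerivAt_const s (1:ℝ)).sub ((hy s hs).pow 2)).sub ((hz s hs).pow 2)
      refine h.congr_deriv ?_
      push_cast
      ring
    have hd := (hw.pow 2).sub (hP.mul hv)
    have hd' : HasDerivAt H 0 s := by
      refine hd.congr_deriv ?_
      rw [hODEy s hs, hODEz s hs]
      push_cast
      ring
    exact hd'
  have hH0 : H 0 = 0 := by
    simp only [hHdef, hy0, hy'0, hz0, hz'0]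
    ring
  have hHzero : ∀ s ∈ I, H s = 0 := by
    intro s hs
    have hb := hconv.norm_image_sub_le_of_norm_hasDerivWithin_le
      (f' := fun _ => (0:ℝ)) (C := 0)
      (fun t ht => (hHderiv t ht).hasDerivWithinAt)
      (fun t _ => by simp) h0 hs
    rw [hH0, sub_zero, zero_mul] at hb
    simpa using le_antisymm hb (norm_nonneg _)
  have hvderiv : ∀ s ∈ I, HasDerivAt (fun t => 1 - y t ^ 2 - z t ^ 2)
      (-(2 * y s * y' s) - 2 * z s * z' s) s := by
    intro s hs
    have h := ((hasDerivAt_const s (1:ℝ)).sub ((hy s hs).pow 2)).sub ((hz s hs).pow 2)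
    refine h.congr_deriv ?_
    push_cast
    ring
  refine ⟨fun t => -(y t * y' t + z t * z' t) / Real.sqrt (1 - y t ^ 2 - z t ^ 2),
    ?_, ?_⟩
  · intro s hs
    have hvpos : (0:ℝ) < 1 - y s ^ 2 - z s ^ 2 := by
      have := hlt s hs; linarith
    have hsne : Real.sqrt (1 - y s ^ 2 - z s ^ 2) ≠ 0 :=
      (Real.sqrt_pos.mpr hvpos).ne'
    have hcomp := (Real.hasDerivAt_sqrt hvpos.ne').comp s (hvderiv s hs)
    have hxfun : x = fun t => Real.sqrt (1 - y t ^ 2 - z t ^ 2) := funext hx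
    rw [hxfun]
    have heq : -(y s * y' s + z s * z' s) / Real.sqrt (1 - y s ^ 2 - z s ^ 2) =
        1 / (2 * Real.sqrt (1 - y s ^ 2 - z s ^ 2)) *
          (-(2 * y s * y' s) - 2 * z s * z' s) := by
      field_simp
      ring
    exact hcomp.congr_deriv heq.symm
  · intro s hs
    have hvpos : (0:ℝ) < 1 - y s ^ 2 - z s ^ 2 := by
      have := hlt s hs; linarith
    have hsq : Real.sqrt (1 - y s ^ 2 - z s ^ 2) ^ 2 = 1 - y s ^ 2 - z s ^ 2 :=
      Real.sq_sqrt hvpos.le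
    have hHs : (y s * y' s + z s * z' s) ^ 2 =
        (y s ^ 2 + 4 * z s ^ 2 - y' s ^ 2 - z' s ^ 2) * (1 - y s ^ 2 - z s ^ 2) := by
      have h := hHzero s hs
      simp only [hHdef] at h
      linarith
    have hsne : Real.sqrt (1 - y s ^ 2 - z s ^ 2) ≠ 0 :=
      (Real.sqrt_pos.mpr hvpos).ne'
    rw [div_pow, neg_pow, hsq, hHs]
    field_simp
    ring
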